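/- Let T : C[0,1] → C[0,1] be a positive linear operator with T(e₀) = e₀ and T(e₁) ≥ e₁ (pointwise on [0,1]), and suppose S : C[0,1] → C[0,1] is an operator such that for every f ∈ C[0,1] the iterates T^m(f) converge uniformly on [0,1] to S(f). Then for every g ∈ C[0,1] that is twice continuously differentiable on [0,1], every m ∈ ℕ and every x ∈ [0,1], one has |S(g;x) − T^m(g;x)| ≤ (1/2)·‖g''‖·|S(e₂;x) − T^m(e₂;x)| + ‖g'‖·|T^m(e₁;x) − S(e₁;x)|, where ‖g'‖ and ‖g''‖ denote the sup norms of the first and second derivatives of g on [0,1]. -/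

import Mathlib

open Filter Topology

noncomputable section

/-- The unit interval `[0,1]` as a subset of `ℝ`. -/
abbrev I01 : Set ℝ := Set.Icc 0 1

/-- The space `C[0,1]` of continuous real-valued functions on `[0,1]`. -/
abbrev CI := C(I01, ℝ)

/-- The monomial `e i : x ↦ x ^ i`. -/
def e (i : ℕ) : CI := ⟨fun x => (x : ℝ) ^ i, (continuous_subtype_val).pow i⟩

/-- A linear operator on `C[0,1]` is positive if it maps nonnegative functions to
nonnegative functions. -/
def IsPositive (T : CI →ₗ[ℝ] CI) : Prop :=
  ∀ f : CI, (∀ x, 0 ≤ f x) → ∀ x, 0 ≤ T f x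

/-- The `m`-th iterate of `T`. -/
def iter (T : CI →ₗ[ℝ] CI) : ℕ → (CI →ₗ[ℝ] CI)
  | 0 => LinearMap.id
  | m + 1 => T ∘ₗ iter T m

/-- The sup norm `sup {|h x| : x ∈ [0,1]}` of a function on `[0,1]`. -/
def supAbsOn (h : ℝ → ℝ) : ℝ := sSup ((fun x => |h x|) '' I01)

/-- Monotone helper: nonnegative derivative on an interval. -/
lemma mono_aux {f f' : ℝ → ℝ} {c d : ℝ} (hcd : c ≤ d)
    (hf : ∀ x ∈ Set.Icc c d, HasDerivWithinAt f (f' x) (Set.Icc c d) x)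
    (h0 : ∀ x ∈ Set.Ioo c d, 0 ≤ f' x) : f c ≤ f d := by
  have hmono := monotoneOn_of_hasDerivWithinAt_nonneg (convex_Icc c d)
    (fun x hx => (hf x hx).continuousWithinAt)
    (fun x hx => (hf x (interior_subset hx)).mono interior_subset)
    (fun x hx => h0 x (by rwa [interior_Icc] at hx))
  exact hmono (Set.left_mem_Icc.2 hcd) (Set.right_mem_Icc.2 hcd) hcd

/-- Antitone helper: nonpositive derivative on an interval. -/
lemma anti_aux {f f' : ℝ → ℝ} {c d : ℝ} (hcd : c ≤ d)
    (hf : ∀ x ∈ Set.Icc c d, HasDerivWithinAt f (f' x) (Set.Icc c d) x)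
    (h0 : ∀ x ∈ Set.Ioo c d, f' x ≤ 0) : f d ≤ f c := by
  have hanti := antitoneOn_of_hasDerivWithinAt_nonpos (convex_Icc c d)
    (fun x hx => (hf x hx).continuousWithinAt)
    (fun x hx => (hf x (interior_subset hx)).mono interior_subset)
    (fun x hx => h0 x (by rwa [interior_Icc] at hx))
  exact hanti (Set.left_mem_Icc.2 hcd) (Set.right_mem_Icc.2 hcd) hcd

/-- One-sided Taylor estimate. -/
lemma onesided_aux {g g' : ℝ → ℝ} {M : ℝ}
    (hd1 : ∀ x ∈ I01, HasDerivWithinAt g (g' x) I01 x)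
    (hlip : ∀ a ∈ I01, ∀ b ∈ I01, |g' b - g' a| ≤ M * |b - a|)
    {a b : ℝ} (ha : a ∈ I01) (hb : b ∈ I01) :
    g b - g a - g' a * (b - a) ≤ M / 2 * (b - a) ^ 2 := by
  have hud : ∀ x ∈ I01, HasDerivWithinAt
      (fun s => M / 2 * (s - a) ^ 2 - (g s - g a - g' a * (s - a)))
      (M * (x - a) - (g' x - g' a)) I01 x := by
    intro x hx
    have h2 := (((hasDerivWithinAt_id x I01).sub_const a).pow 2).const_mul (M / 2)
    have h3 := ((hd1 x hx).sub_const (g a)).sub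
      (((hasDerivWithinAt_id x I01).sub_const a).const_mul (g' a))
    have h4 := h2.sub h3
    convert h4 using 1
    all_goals try rfl
    all_goals try funext s
    all_goals simp only [id_eq, Pi.sub_apply, Pi.pow_apply]
    all_goals push_cast
    all_goals ring
  rcases le_total a b with hab | hab
  · have hsub : Set.Icc a b ⊆ I01 := Set.Icc_subset_Icc ha.1 hb.2
    have key := mono_aux (f := fun s => M / 2 * (s - a) ^ 2 - (g s - g a - g' a * (s - a)))
      (f' := fun x => M * (x - a) - (g' x - g' a)) hab
      (fun x hx => (hud x (hsub hx)).mono hsub)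
      (fun x hx => by
        have h1 := hlip a ha x (hsub (Set.Ioo_subset_Icc_self hx))
        rw [abs_of_nonneg (by linarith [hx.1] : (0:ℝ) ≤ x - a)] at h1
        have := (abs_le.1 h1).2
        show (0:ℝ) ≤ M * (x - a) - (g' x - g' a)
        linarith)
    try simp only at key
    nlinarith [key]
  · have hsub : Set.Icc b a ⊆ I01 := Set.Icc_subset_Icc hb.1 ha.2
    have key := anti_aux (f := fun s => M / 2 * (s - a) ^ 2 - (g s - g a - g' a * (s - a)))
      (f' := fun x => M * (x - a) - (g' x - g' a)) hab
      (fun x hx => (hud x (hsub hx)).mono hsub)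
      (fun x hx => by
        have h1 := hlip a ha x (hsub (Set.Ioo_subset_Icc_self hx))
        rw [abs_of_nonpos (by linarith [hx.2] : x - a ≤ (0:ℝ))] at h1
        have := (abs_le.1 h1).1
        show M * (x - a) - (g' x - g' a) ≤ (0:ℝ)
        linarith)
    try simp only at key
    nlinarith [key]

/-- Two-sided Taylor estimate. -/
lemma taylor_aux {g g' : ℝ → ℝ} {M : ℝ}
    (hd1 : ∀ x ∈ I01, HasDerivWithinAt g (g' x) I01 x)
    (hlip : ∀ a ∈ I01, ∀ b ∈ I01, |g' b - g' a| ≤ M * |b - a|)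
    {a b : ℝ} (ha : a ∈ I01) (hb : b ∈ I01) :
    |g b - g a - g' a * (b - a)| ≤ M / 2 * (b - a) ^ 2 := by
  have hupper := onesided_aux hd1 hlip ha hb
  have hd1' : ∀ x ∈ I01, HasDerivWithinAt (fun s => -g s) (-g' x) I01 x :=
    fun x hx => (hd1 x hx).neg
  have hlip' : ∀ a ∈ I01, ∀ b ∈ I01, |(-g' b) - (-g' a)| ≤ M * |b - a| := by
    intro a ha b hb
    have := hlip a ha b hb
    rw [show (-g' b) - (-g' a) = -(g' b - g' a) by ring, abs_neg]
    exact this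
  have hlower := onesided_aux (g := fun s => -g s) (g' := fun s => -g' s) hd1' hlip' ha hb
  try simp only at hlower
  rw [abs_le]
  constructor <;> linarith

theorem stmt15 (T : CI →ₗ[ℝ] CI) (hpos : IsPositive T)
    (h0 : T (e 0) = e 0) (h1 : ∀ x : I01, e 1 x ≤ T (e 1) x)
    (S : CI → CI)
    (hS : ∀ f : CI, TendstoUniformly (fun m x => iter T m f x) (fun x => S f x) atTop)
    (g g' g'' : ℝ → ℝ) (G : CI) (hGg : ∀ x : I01, G x = g x)
    (hd1 : ∀ x ∈ I01, HasDerivWithinAt g (g' x) I01 x)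
    (hd2 : ∀ x ∈ I01, HasDerivWithinAt g' (g'' x) I01 x)
    (hc : ContinuousOn g'' I01) :
    ∀ m : ℕ, ∀ x : I01,
      |S G x - iter T m G x| ≤
        (1 / 2) * supAbsOn g'' * |S (e 2) x - iter T m (e 2) x|
        + supAbsOn g' * |iter T m (e 1) x - S (e 1) x| := by
  intro m x
  set M1 := supAbsOn g' with hM1def
  set M2 := supAbsOn g'' with hM2def
  have he0 : ∀ t : I01, e 0 t = 1 := fun t => by simp [e]
  have he1 : ∀ t : I01, e 1 t = (t : ℝ) := fun t => by simp [e]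
  have he2 : ∀ t : I01, e 2 t = (t : ℝ) ^ 2 := fun t => by simp [e]
  have hI : (0:ℝ) ∈ I01 := ⟨le_refl 0, zero_le_one⟩
  have hcg' : ContinuousOn g' I01 := fun t ht => (hd2 t ht).continuousWithinAt
  have hbdd1 : BddAbove ((fun t => |g' t|) '' I01) :=
    (isCompact_Icc.image_of_continuousOn hcg'.abs).bddAbove
  have hbdd2 : BddAbove ((fun t => |g'' t|) '' I01) :=
    (isCompact_Icc.image_of_continuousOn hc.abs).bddAbove
  have hM1 : ∀ t ∈ I01, |g' t| ≤ M1 := fun t ht => le_csSup hbdd1 ⟨t, ht, rfl⟩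
  have hM2 : ∀ t ∈ I01, |g'' t| ≤ M2 := fun t ht => le_csSup hbdd2 ⟨t, ht, rfl⟩
  have hM1nn : 0 ≤ M1 := le_trans (abs_nonneg _) (hM1 0 hI)
  have hM2nn : 0 ≤ M2 := le_trans (abs_nonneg _) (hM2 0 hI)
  have hlip : ∀ a ∈ I01, ∀ b ∈ I01, |g' b - g' a| ≤ M2 * |b - a| := by
    intro a ha b hb
    have := Convex.norm_image_sub_le_of_norm_hasDerivWithin_le hd2
      (fun t ht => by rw [Real.norm_eq_abs]; exact hM2 t ht) (convex_Icc 0 1) ha hb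
    simpa [Real.norm_eq_abs] using this
  have htay : ∀ a ∈ I01, ∀ b ∈ I01, |g b - g a - g' a * (b - a)| ≤ M2 / 2 * (b - a) ^ 2 :=
    fun a ha b hb => taylor_aux hd1 hlip ha hb
  -- operator facts
  have iter_succ : ∀ k (f : CI), iter T (k + 1) f = T (iter T k f) := fun k f => rfl
  have iter_pos : ∀ k, IsPositive (iter T k) := by
    intro k
    induction k with
    | zero => intro f hf t; exact hf t
    | succ k ih => intro f hf t; exact hpos _ (ih f hf) t
  have iter_mono : ∀ k (f h : CI), (∀ t, f t ≤ h t) → ∀ t, iter T k f t ≤ iter T k h t := by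
    intro k f h hfh t
    have h2 := iter_pos k (h - f)
      (fun s => by simpa [ContinuousMap.sub_apply, sub_nonneg] using hfh s) t
    rw [map_sub, ContinuousMap.sub_apply] at h2
    linarith
  have abs_iter : ∀ k (h F : CI), (∀ t, |h t| ≤ F t) → ∀ t, |iter T k h t| ≤ iter T k F t := by
    intro k h F hb t
    have hh1 : iter T k h t ≤ iter T k F t := iter_mono k h F (fun s => (abs_le.1 (hb s)).2) t
    have hh2 : iter T k (-h) t ≤ iter T k F t := iter_mono k (-h) F (fun s => by
      have := (abs_le.1 (hb s)).1
      simp only [ContinuousMap.neg_apply]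
      linarith) t
    rw [map_neg, ContinuousMap.neg_apply] at hh2
    exact abs_le.2 ⟨by linarith, hh1⟩
  have iter_e0 : ∀ k, iter T k (e 0) = e 0 := by
    intro k
    induction k with
    | zero => rfl
    | succ k ih => rw [iter_succ, ih, h0]
  have iter_add : ∀ j k (f : CI), iter T (j + k) f = iter T j (iter T k f) := by
    intro j
    induction j with
    | zero => intro k f; rw [Nat.zero_add]; rfl
    | succ j ih =>
      intro k f
      rw [show j + 1 + k = (j + k) + 1 by omega, iter_succ, iter_succ, ih]
  have e1_le : ∀ k (t : I01), e 1 t ≤ iter T k (e 1) t := by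
    intro k
    induction k with
    | zero => intro t; exact le_refl _
    | succ k ih =>
      intro t
      have step : 0 ≤ T (iter T k (e 1) - e 1) t := hpos _
        (fun s => by simpa [ContinuousMap.sub_apply, sub_nonneg] using ih s) t
      rw [map_sub, ContinuousMap.sub_apply] at step
      have heq : iter T (k + 1) (e 1) t = T (iter T k (e 1)) t := rfl
      rw [heq]
      linarith [h1 t]
  -- key pointwise estimate for a single iterate against the identity
  have hE : ∀ k (t : I01), |iter T k G t - G t| ≤
      M2 / 2 * (iter T k (e 2) t - (t : ℝ) ^ 2) + M1 * (iter T k (e 1) t - (t : ℝ)) := by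
    intro k t
    set c1 : ℝ := g t - g' t * t with hc1
    set P : CI := G - c1 • e 0 - g' t • e 1 with hP
    set Q : CI := (M2 / 2) • e 2 - (M2 * t) • e 1 + (M2 / 2 * (t : ℝ) ^ 2) • e 0 with hQ
    have hPs : ∀ s : I01, P s = g s - g t - g' t * ((s : ℝ) - t) := by
      intro s
      simp only [hP, ContinuousMap.sub_apply, ContinuousMap.smul_apply, smul_eq_mul,
        he0, he1, hGg s, hc1]
      ring
    have hQs : ∀ s : I01, Q s = M2 / 2 * ((s : ℝ) - t) ^ 2 := by
      intro s
      simp only [hQ, ContinuousMap.add_apply, ContinuousMap.sub_apply,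
        ContinuousMap.smul_apply, smul_eq_mul, he0, he1, he2]
      ring
    have hPQ : ∀ s : I01, |P s| ≤ Q s := by
      intro s
      rw [hPs s, hQs s]
      exact htay t t.2 s s.2
    have habs := abs_iter k P Q hPQ t
    have hPt : iter T k P t = iter T k G t - c1 - g' t * iter T k (e 1) t := by
      simp only [hP, map_sub, map_smul, iter_e0, ContinuousMap.sub_apply,
        ContinuousMap.smul_apply, smul_eq_mul, he0]
      ring
    have hQt : iter T k Q t =
        M2 / 2 * iter T k (e 2) t - M2 * t * iter T k (e 1) t + M2 / 2 * (t : ℝ) ^ 2 := by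
      simp only [hQ, map_add, map_sub, map_smul, iter_e0, ContinuousMap.add_apply,
        ContinuousMap.sub_apply, ContinuousMap.smul_apply, smul_eq_mul, he0]
      ring
    rw [hPt, hQt] at habs
    have hA1 : (t : ℝ) ≤ iter T k (e 1) t := by
      have := e1_le k t
      rwa [he1] at this
    have ht0 : (0:ℝ) ≤ (t : ℝ) := t.2.1
    have hgt : |g' t| ≤ M1 := hM1 t t.2
    have hsplit : iter T k G t - G t =
        (iter T k G t - c1 - g' t * iter T k (e 1) t) + g' t * (iter T k (e 1) t - t) := by
      rw [hGg t, hc1]; ring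
    calc |iter T k G t - G t|
        ≤ |iter T k G t - c1 - g' t * iter T k (e 1) t| + |g' t| * (iter T k (e 1) t - t) := by
          rw [hsplit]
          refine (abs_add_le _ _).trans ?_
          rw [abs_mul, abs_of_nonneg (sub_nonneg.2 hA1)]
      _ ≤ (M2 / 2 * iter T k (e 2) t - M2 * t * iter T k (e 1) t + M2 / 2 * (t : ℝ) ^ 2)
            + M1 * (iter T k (e 1) t - (t : ℝ)) := by
          have := mul_le_mul_of_nonneg_right hgt (sub_nonneg.2 hA1)
          linarith
      _ ≤ M2 / 2 * (iter T k (e 2) t - (t : ℝ) ^ 2) + M1 * (iter T k (e 1) t - (t : ℝ)) := by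
          nlinarith [mul_le_mul_of_nonneg_left hA1 (mul_nonneg hM2nn ht0)]
  -- transfer through `iter T m`
  have hF : ∀ k (y : I01), |iter T (m + k) G y - iter T m G y| ≤
      M2 / 2 * (iter T (m + k) (e 2) y - iter T m (e 2) y)
      + M1 * (iter T (m + k) (e 1) y - iter T m (e 1) y) := by
    intro k y
    set h : CI := iter T k G - G with hh
    set Fc : CI := (M2 / 2) • (iter T k (e 2) - e 2) + M1 • (iter T k (e 1) - e 1) with hFc
    have hb : ∀ t, |h t| ≤ Fc t := by
      intro t
      have := hE k t
      simp only [hh, hFc, ContinuousMap.sub_apply, ContinuousMap.add_apply,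
        ContinuousMap.smul_apply, smul_eq_mul, he1, he2]
      exact this
    have habs := abs_iter m h Fc hb y
    simp only [hh, hFc, map_sub, map_add, map_smul, ContinuousMap.sub_apply,
      ContinuousMap.add_apply, ContinuousMap.smul_apply, smul_eq_mul, ← iter_add] at habs
    exact habs
  -- pass to the limit
  have hlim : ∀ f : CI, Tendsto (fun k => iter T (m + k) f x) atTop (𝓝 (S f x)) := by
    intro f
    have h1' : Tendsto (fun n => iter T n f x) atTop (𝓝 (S f x)) := (hS f).tendsto_at x
    have h2' : Tendsto (fun k : ℕ => m + k) atTop atTop := by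
      simpa [add_comm] using tendsto_add_atTop_nat m
    exact h1'.comp h2'
  have hL : Tendsto (fun k => |iter T (m + k) G x - iter T m G x|) atTop
      (𝓝 |S G x - iter T m G x|) := ((hlim G).sub_const _).abs
  have hR : Tendsto (fun k => M2 / 2 * (iter T (m + k) (e 2) x - iter T m (e 2) x)
      + M1 * (iter T (m + k) (e 1) x - iter T m (e 1) x)) atTop
      (𝓝 (M2 / 2 * (S (e 2) x - iter T m (e 2) x) + M1 * (S (e 1) x - iter T m (e 1) x))) :=
    (((hlim (e 2)).sub_const _).const_mul _).add (((hlim (e 1)).sub_const _).const_mul _)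
  have hkey := le_of_tendsto_of_tendsto' hL hR (fun k => hF k x)
  have habs2 : S (e 2) x - iter T m (e 2) x ≤ |S (e 2) x - iter T m (e 2) x| := le_abs_self _
  have habs1 : S (e 1) x - iter T m (e 1) x ≤ |iter T m (e 1) x - S (e 1) x| := by
    rw [abs_sub_comm]; exact le_abs_self _
  nlinarith [hkey, mul_le_mul_of_nonneg_left habs2 (by linarith : (0:ℝ) ≤ M2 / 2),
    mul_le_mul_of_nonneg_left habs1 hM1nn]
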